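/- arXiv:2508.06876 — 2 statements merged into one kernel-verified Lean document; each statement's English description precedes it below -/
import Mathlib

section
/- Let M ⊆ N be L-structures. Then M is ∃∀-closed in N if and only if there exists an elementary extension M' of M and a map f : N → M' fixing M pointwise such that f preserves all universal formulas, equivalently such that f(N) is ∃-closed in M'. -/
open FirstOrder Language

universe u v w

/-- `IsQN true k φ` says that `φ` is a `Σ_k`-formula and `IsQN false k φ` says that `φ` is a
`Π_k`-formula.  In particular `IsQN true 2` captures the `∃∀`-formulas and `IsQN false 1` the
universal formulas. -/
inductive IsQN {L : FirstOrder.Language} {α : Type*} :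
    Bool → ℕ → {n : ℕ} → L.BoundedFormula α n → Prop
  | of_isQF {b k n} {φ : L.BoundedFormula α n} : φ.IsQF → IsQN b k φ
  | of_flip {b k n} {φ : L.BoundedFormula α n} : IsQN (!b) k φ → IsQN b (k + 1) φ
  | ex {k n} {φ : L.BoundedFormula α (n + 1)} : IsQN true (k + 1) φ → IsQN true (k + 1) φ.ex
  | all {k n} {φ : L.BoundedFormula α (n + 1)} : IsQN false (k + 1) φ → IsQN false (k + 1) φ.all

section Lemmas
variable {L : FirstOrder.Language} {α β : Type*}

theorem IsQN.isQF_of_zero {b : Bool} {n : ℕ} {φ : L.BoundedFormula α n}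
    (h : IsQN b 0 φ) : φ.IsQF := by
  cases h with
  | of_isQF h => exact h

theorem IsQN.relabel {b : Bool} {k : ℕ} {n m : ℕ} {φ : L.BoundedFormula α m}
    (h : IsQN b k φ) (g : α → β ⊕ Fin n) : IsQN b k (φ.relabel g) := by
  induction h with
  | of_isQF h => exact IsQN.of_isQF (h.relabel g)
  | of_flip _ ih => exact IsQN.of_flip ih
  | ex _ ih => rw [BoundedFormula.relabel_ex]; exact IsQN.ex ih
  | all _ ih => rw [BoundedFormula.relabel_all]; exact IsQN.all ih

theorem isQF_toFormula {n : ℕ} {φ : L.BoundedFormula α n}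
    (h : φ.IsQF) : φ.toFormula.IsQF := by
  induction h with
  | falsum => exact BoundedFormula.isQF_bot
  | of_isAtomic h =>
    cases h with
    | equal t₁ t₂ => exact (BoundedFormula.IsAtomic.equal _ _).isQF
    | rel R ts => exact (BoundedFormula.IsAtomic.rel _ _).isQF
  | imp _ _ ih1 ih2 => exact ih1.imp ih2

theorem IsQN.toFormula {b : Bool} {k : ℕ} {n : ℕ} {φ : L.BoundedFormula α n}
    (h : IsQN b k φ) : IsQN b k φ.toFormula := by
  induction h with
  | of_isQF h => exact IsQN.of_isQF (isQF_toFormula h)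
  | of_flip _ ih => exact IsQN.of_flip ih
  | @ex k n φ _ ih =>
    have : (φ.ex).toFormula = ((BoundedFormula.relabel
        (Sum.elim (Sum.inl ∘ Sum.inl) (Sum.map Sum.inr id ∘ finSumFinEquiv.symm))
        φ.toFormula : L.BoundedFormula (α ⊕ Fin n) 1).ex) := rfl
    rw [this]
    exact IsQN.ex (ih.relabel _)
  | @all k n φ _ ih =>
    show IsQN false (k+1) ((BoundedFormula.relabel
        (Sum.elim (Sum.inl ∘ Sum.inl) (Sum.map Sum.inr id ∘ finSumFinEquiv.symm))
        φ.toFormula : L.BoundedFormula (α ⊕ Fin n) 1).all)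
    exact IsQN.all (ih.relabel _)

end Lemmas

section Lemmas2
variable {L : FirstOrder.Language} {α β : Type*}

theorem isQN_alls : ∀ {n : ℕ} {φ : L.BoundedFormula α n},
    IsQN false 1 φ → IsQN false 1 φ.alls
  | 0, _, h => h
  | n + 1, φ, h => isQN_alls (φ := φ.all) h.all

theorem isQN_exs : ∀ {n : ℕ} {φ : L.BoundedFormula α n},
    IsQN true 2 φ → IsQN true 2 φ.exs
  | 0, _, h => h
  | n + 1, φ, h => isQN_exs (φ := φ.ex) h.ex

theorem isQN_iAlls {γ : Type*} [Finite γ] {φ : L.Formula (β ⊕ γ)}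
    (h : φ.IsQF) : IsQN false 1 (φ.iAlls γ) :=
  isQN_alls (IsQN.of_isQF (h.relabel _))

theorem isQN_iExs {γ : Type*} [Finite γ] (f : α → β ⊕ γ) {φ : L.Formula α}
    (h : IsQN false 1 φ) : IsQN true 2 ((φ.relabel f).iExs γ) :=
  isQN_exs (@IsQN.of_flip _ _ true 1 _ _ ((h.relabel _).relabel _))

theorem qf_nf {n : ℕ} {φ : L.BoundedFormula α n} (h : φ.IsQF) :
    ∃ (r : ℕ) (ψ : L.Formula (α ⊕ (Fin n ⊕ Fin r))), ψ.IsQF ∧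
      ∀ (K : Type*) [L.Structure K] (v : α → K) (xs : Fin n → K),
        φ.Realize v xs ↔ ∀ ys : Fin r → K, ψ.Realize (Sum.elim v (Sum.elim xs ys)) := by
  refine ⟨0, φ.toFormula.relabel (Sum.map id Sum.inl), ?_, ?_⟩
  · exact (isQF_toFormula h).relabel (Sum.inl ∘ (Sum.map id Sum.inl))
  · intro K _ v xs
    constructor
    · intro hr ys
      simp only [Formula.realize_relabel, BoundedFormula.realize_toFormula]
      convert hr using 2 <;> funext i <;> rfl
    · intro hr
      have := hr (fun i => i.elim0)
      simp only [Formula.realize_relabel, BoundedFormula.realize_toFormula] at this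
      convert this using 2 <;> funext i <;> rfl

/-- Semantic universal normal form. -/
theorem isQN_false_one_nf {n : ℕ} {φ : L.BoundedFormula α n} (h : IsQN false 1 φ) :
    ∃ (r : ℕ) (ψ : L.Formula (α ⊕ (Fin n ⊕ Fin r))), ψ.IsQF ∧
      ∀ (K : Type*) [L.Structure K] (v : α → K) (xs : Fin n → K),
        φ.Realize v xs ↔ ∀ ys : Fin r → K, ψ.Realize (Sum.elim v (Sum.elim xs ys)) := by
  generalize hb : false = b at h
  generalize hk : 1 = k at h
  induction h with
  | of_isQF h => exact qf_nf h
  | @of_flip b' k' n' φ' h _ =>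
    exact qf_nf (IsQN.isQF_of_zero ((show k' = 0 by omega) ▸ h))
  | ex _ _ => exact absurd hb (by simp)
  | @all k n φ h ih =>
    obtain ⟨r, ψ, hψ, hr⟩ := ih hb (by omega)
    refine ⟨r + 1, ψ.relabel (Sum.elim (Sum.inl) (Sum.elim
      (fun i => Fin.lastCases (Sum.inr (Sum.inr 0)) (fun j => Sum.inr (Sum.inl j)) i)
      (fun j => Sum.inr (Sum.inr j.succ)))), hψ.relabel _, ?_⟩
    intro K _ v xs
    rw [BoundedFormula.realize_all]
    constructor
    · intro hall ys
      have := (hr K v (Fin.snoc xs (ys 0))).1 (hall (ys 0)) (ys ∘ Fin.succ)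
      rw [Formula.realize_relabel]
      convert this using 2
      funext i
      rcases i with a | i
      · rfl
      rcases i with i | j
      · refine Fin.lastCases ?_ (fun j => ?_) i <;>
          simp [Fin.lastCases_last, Fin.lastCases_castSucc, Fin.snoc_last, Fin.snoc_castSucc]
      · rfl
    · intro hrel x
      refine (hr K v (Fin.snoc xs x)).2 ?_
      intro ys
      have := hrel (Fin.cons x ys)
      rw [Formula.realize_relabel] at this
      convert this using 2
      funext i
      rcases i with a | i
      · rfl
      rcases i with i | j
      · refine Fin.lastCases ?_ (fun j => ?_) i <;>
          simp [Fin.lastCases_last, Fin.lastCases_castSucc, Fin.snoc_last, Fin.snoc_castSucc]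
      · simp [Fin.cons_succ]

end Lemmas2

section Lemmas3
variable {L : FirstOrder.Language}

/-- Conjunction of two universal formulas is equivalent to a universal formula. -/
theorem univ_conj {m₁ m₂ : ℕ} {φ₁ : L.Formula (Fin m₁)} {φ₂ : L.Formula (Fin m₂)}
    (h₁ : IsQN false 1 φ₁) (h₂ : IsQN false 1 φ₂) :
    ∃ χ : L.Formula (Fin (m₁ + m₂)), IsQN false 1 χ ∧
      ∀ (K : Type*) [L.Structure K] [Nonempty K] (w : Fin (m₁ + m₂) → K),
        χ.Realize w ↔ φ₁.Realize (w ∘ Fin.castAdd m₂) ∧ φ₂.Realize (w ∘ Fin.natAdd m₁) := by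
  obtain ⟨r₁, ψ₁, hψ₁, hr₁⟩ := isQN_false_one_nf h₁
  obtain ⟨r₂, ψ₂, hψ₂, hr₂⟩ := isQN_false_one_nf h₂
  classical
  let g₁ : Fin m₁ ⊕ (Fin 0 ⊕ Fin r₁) → Fin (m₁ + m₂) ⊕ (Fin r₁ ⊕ Fin r₂) :=
    Sum.elim (fun i => Sum.inl (Fin.castAdd m₂ i))
      (Sum.elim (fun x => x.elim0) (fun y => Sum.inr (Sum.inl y)))
  let g₂ : Fin m₂ ⊕ (Fin 0 ⊕ Fin r₂) → Fin (m₁ + m₂) ⊕ (Fin r₁ ⊕ Fin r₂) :=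
    Sum.elim (fun i => Sum.inl (Fin.natAdd m₁ i))
      (Sum.elim (fun x => x.elim0) (fun y => Sum.inr (Sum.inr y)))
  let ρ : L.Formula (Fin (m₁ + m₂) ⊕ (Fin r₁ ⊕ Fin r₂)) :=
    (ψ₁.relabel g₁) ⊓ (ψ₂.relabel g₂)
  have hρ : ρ.IsQF := (hψ₁.relabel _).inf (hψ₂.relabel _)
  refine ⟨ρ.iAlls (Fin r₁ ⊕ Fin r₂), isQN_iAlls hρ, ?_⟩
  intro K _ _ w
  rw [Formula.realize_iAlls]
  have heq : ∀ i : (Fin r₁ ⊕ Fin r₂) → K,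
      (fun a => Sum.elim w i a) = Sum.elim w i := fun i => rfl
  constructor
  · intro hall
    constructor
    · refine (hr₁ K (w ∘ Fin.castAdd m₂) default).2 ?_
      intro ys
      have := hall (Sum.elim ys (fun _ => Classical.arbitrary K))
      rw [heq] at this
      have h' := (BoundedFormula.realize_inf.1 this).1
      replace h' := Formula.realize_relabel.mp h'
      convert h' using 2
      funext a
      rcases a with a | a
      · rfl
      rcases a with a | a
      · exact a.elim0
      · rfl
    · refine (hr₂ K (w ∘ Fin.natAdd m₁) default).2 ?_
      intro ys
      have := hall (Sum.elim (fun _ => Classical.arbitrary K) ys)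
      rw [heq] at this
      have h' := (BoundedFormula.realize_inf.1 this).2
      replace h' := Formula.realize_relabel.mp h'
      convert h' using 2
      funext a
      rcases a with a | a
      · rfl
      rcases a with a | a
      · exact a.elim0
      · rfl
  · rintro ⟨hc₁, hc₂⟩ i
    rw [heq]
    replace hc₁ := (hr₁ K (w ∘ Fin.castAdd m₂) default).1 hc₁
    replace hc₂ := (hr₂ K (w ∘ Fin.natAdd m₁) default).1 hc₂
    refine BoundedFormula.realize_inf.2 ⟨?_, ?_⟩
    · refine Formula.realize_relabel.mpr ?_
      have := hc₁ (i ∘ Sum.inl)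
      convert this using 2
      funext a
      rcases a with a | a
      · rfl
      rcases a with a | a
      · exact a.elim0
      · rfl
    · refine Formula.realize_relabel.mpr ?_
      have := hc₂ (i ∘ Sum.inr)
      convert this using 2
      funext a
      rcases a with a | a
      · rfl
      rcases a with a | a
      · exact a.elim0
      · rfl

end Lemmas3

section Lemmas4
variable {L : FirstOrder.Language} {N' M' : Type*} [L.Structure N'] [L.Structure M']
  {f : N' → M'}

/-- If `f` preserves universal formulas at the `Formula` level, it preserves them at the
`BoundedFormula` level. -/
theorem univ_preserved
    (H1 : ∀ (m : ℕ) (φ : L.Formula (Fin m)), IsQN false 1 φ → ∀ v : Fin m → N',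
      Formula.Realize φ v → Formula.Realize φ (f ∘ v))
    {m n : ℕ} {φ : L.BoundedFormula (Fin m) n} (h : IsQN false 1 φ)
    (v : Fin m → N') (xs : Fin n → N') (hr : φ.Realize v xs) :
    φ.Realize (f ∘ v) (f ∘ xs) := by
  set e : (Fin m ⊕ Fin n) ≃ Fin (m + n) := finSumFinEquiv
  set ψ : L.Formula (Fin (m + n)) := φ.toFormula.relabel e with hψdef
  have hψ : IsQN false 1 ψ := (h.toFormula).relabel _
  have h1 : ψ.Realize (Sum.elim v xs ∘ e.symm) := by
    rw [Formula.realize_relabel]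
    rw [show (Sum.elim v xs ∘ e.symm) ∘ e = Sum.elim v xs by
      funext i; simp]
    rw [BoundedFormula.realize_toFormula]
    exact hr
  have h2 := H1 _ ψ hψ _ h1
  rw [Formula.realize_relabel] at h2
  rw [show (f ∘ (Sum.elim v xs ∘ e.symm)) ∘ e = Sum.elim (f ∘ v) (f ∘ xs) by
    funext i; rcases i with i | i <;> simp] at h2
  rw [BoundedFormula.realize_toFormula] at h2
  exact h2

theorem ea_preserved
    (H1 : ∀ (m : ℕ) (φ : L.Formula (Fin m)), IsQN false 1 φ → ∀ v : Fin m → N',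
      Formula.Realize φ v → Formula.Realize φ (f ∘ v))
    {m n : ℕ} {φ : L.BoundedFormula (Fin m) n} {b : Bool} {k : ℕ} (h : IsQN b k φ)
    (hb : b = true) (hk : k = 2) :
    ∀ (v : Fin m → N') (xs : Fin n → N'), φ.Realize v xs → φ.Realize (f ∘ v) (f ∘ xs) := by
  induction h with
  | of_isQF h => exact fun v xs hr => univ_preserved H1 (IsQN.of_isQF h) v xs hr
  | @of_flip b' k' n' φ' h _ =>
    subst hb
    have h' : IsQN false 1 φ' := by
      have : k' = 1 := by omega
      subst this
      simpa using h
    exact fun v xs hr => univ_preserved H1 h' v xs hr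
  | @ex k' n' φ' h ih =>
    intro v xs hr
    rw [BoundedFormula.realize_ex] at hr ⊢
    obtain ⟨x, hx⟩ := hr
    refine ⟨f x, ?_⟩
    have := ih rfl hk v (Fin.snoc xs x) hx
    rwa [Fin.comp_snoc] at this
  | all _ _ => exact absurd hb (by simp)

end Lemmas4

/-- for a substructure `M` of an `L`-structure `N`, `M` is `∃∀`-closed in `N`
(every `∃∀`-formula with parameters in `M` true in `N` is true in `M`) if and only if there is
an elementary extension `M'` of `M` and a map `f : N → M'` fixing `M` pointwise which preserves
all universal formulas. -/
theorem statement5 (L : FirstOrder.Language.{u, v}) (N : Type w) [L.Structure N]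
    (M : L.Substructure N) :
    -- `M ⊆_{∃∀} N`:
    (∀ (m : ℕ) (φ : L.Formula (Fin m)), IsQN true 2 φ → ∀ v : Fin m → M,
      Formula.Realize (M := N) φ (fun i => (v i : N)) → Formula.Realize (M := M) φ v) ↔
    -- iff there is a universal-formula-preserving map from `N` to an elementary extension of
    -- `M`, fixing `M` pointwise:
    ∃ (M' : Type w) (_ : L.Structure M') (g : M ↪ₑ[L] M') (f : N → M'),
      (∀ a : M, f (a : N) = g a) ∧
      (∀ (m : ℕ) (φ : L.Formula (Fin m)), IsQN false 1 φ → ∀ v : Fin m → N,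
        Formula.Realize φ v → Formula.Realize φ (f ∘ v)) := by
  classical
  constructor
  · intro H
    by_cases hNe : IsEmpty N
    · refine ⟨M, inferInstance, ElementaryEmbedding.refl L M, fun n => isEmptyElim n, ?_, ?_⟩
      · intro a; exact isEmptyElim ((a : N))
      · intro m φ hφ v hv
        match m, φ, hφ, v, hv with
        | 0, φ, hφ, v, hv =>
          have h2 : IsQN true 2 φ := @IsQN.of_flip _ _ true 1 _ _ hφ
          have hv' : Formula.Realize (M := N) φ
              (fun i => ((finZeroElim (α := fun _ => M) i : M) : N)) := by
            convert hv using 1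
          have := H 0 φ h2 finZeroElim hv'
          convert this using 1
        | m + 1, φ, hφ, v, hv => exact isEmptyElim (v 0)
    · rw [not_isEmpty_iff] at hNe
      -- `M` is nonempty
      have hMne : Nonempty M := by
        set ψ0 : L.BoundedFormula (Fin 0) 1 :=
          Term.bdEqual (Term.var (Sum.inr 0)) (Term.var (Sum.inr 0)) with hψ0
        have hQN0 : IsQN true 2 ψ0.ex :=
          IsQN.ex (IsQN.of_isQF (BoundedFormula.IsAtomic.equal _ _).isQF)
        have hre : Formula.Realize (M := N) ψ0.ex
            (fun i => ((finZeroElim (α := fun _ => M) i : M) : N)) :=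
          BoundedFormula.realize_ex.mpr ⟨Classical.arbitrary N, by simp [hψ0]⟩
        have h0 := H 0 ψ0.ex hQN0 finZeroElim hre
        obtain ⟨a, -⟩ := BoundedFormula.realize_ex.mp h0
        exact ⟨a⟩
      -- index type: maps `N → M` fixing `M`
      let α := {h : N → M // ∀ a : M, h ↑a = a}
      haveI hα : Nonempty α :=
        ⟨⟨fun x => if hx : x ∈ M then ⟨x, hx⟩ else Classical.arbitrary M,
          fun a => by simp [a.2]⟩⟩
      -- the index category of universal formulas true in `N`
      let D := {d : (Σ _m : ℕ, L.Formula (Fin _m) × (Fin _m → N)) //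
        IsQN false 1 d.2.1 ∧ Formula.Realize (M := N) d.2.1 d.2.2}
      let A : D → Set α := fun d =>
        {h : α | Formula.Realize (M := M) d.1.2.1 (fun i => h.1 (d.1.2.2 i))}
      -- each `A d` is nonempty, by the `∃∀`-closedness hypothesis
      have hAne : ∀ d : D, (A d).Nonempty := by
        rintro ⟨⟨m, φ, v⟩, hφ, hv⟩
        set F : Finset N := Finset.image v Finset.univ with hF
        let Q := {x : {y : N // y ∈ F} // (x : N) ∉ M}
        haveI : Finite Q := Subtype.finite
        let fs : Fin m → Fin m ⊕ Q := fun i =>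
          if h : v i ∈ M then Sum.inl i
          else Sum.inr ⟨⟨v i, by simp [hF]⟩, h⟩
        have hΘ : IsQN true 2 ((φ.relabel fs).iExs Q) := isQN_iExs fs hφ
        let w : Fin m → M := fun i =>
          if h : v i ∈ M then ⟨v i, h⟩ else Classical.arbitrary M
        have hNreal : Formula.Realize (M := N) ((φ.relabel fs).iExs Q) (fun i => ((w i : M) : N)) := by
          simp only [Formula.realize_iExs, Formula.realize_relabel]
          refine ⟨fun q => (q : N), ?_⟩
          convert hv using 1
          funext a
          by_cases h : v a ∈ M
          · simp [fs, w, h]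
          · simp [fs, w, h]
        have hMreal := H m ((φ.relabel fs).iExs Q) hΘ w hNreal
        simp only [Formula.realize_iExs, Formula.realize_relabel] at hMreal
        obtain ⟨iw, hiw⟩ := hMreal
        refine ⟨⟨fun x => if hx : x ∈ M then ⟨x, hx⟩
          else if hq : x ∈ F then iw ⟨⟨x, hq⟩, hx⟩ else Classical.arbitrary M,
          fun a => by simp [a.2]⟩, ?_⟩
        show Formula.Realize (M := M) φ _
        convert hiw using 1
        funext j
        by_cases h : v j ∈ M
        · simp [fs, w, h]
        · have hmem : v j ∈ F := by simp [hF]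
          simp [fs, w, h, hmem]
      -- the family `A` is directed downwards
      have hdir : ∀ d₁ d₂ : D, ∃ d₃ : D, A d₃ ⊆ A d₁ ∩ A d₂ := by
        rintro ⟨⟨m₁, φ₁, v₁⟩, h₁, hv₁⟩ ⟨⟨m₂, φ₂, v₂⟩, h₂, hv₂⟩
        obtain ⟨χ, hχ, hchar⟩ := univ_conj h₁ h₂
        refine ⟨⟨⟨m₁ + m₂, χ, Fin.append v₁ v₂⟩, hχ, ?_⟩, ?_⟩
        · exact (hchar N (Fin.append v₁ v₂)).2 ⟨by
            convert hv₁ using 1; funext i; simp [Fin.append_left], by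
            convert hv₂ using 1; funext i; simp [Fin.append_right]⟩
        · rintro h hh
          have := (hchar M (fun i => h.1 (Fin.append v₁ v₂ i))).1 hh
          constructor
          · show Formula.Realize (M := M) φ₁ _
            convert this.1 using 1
            funext i; simp [Fin.append_left]
          · show Formula.Realize (M := M) φ₂ _
            convert this.2 using 1
            funext i; simp [Fin.append_right]
      -- finite intersections contain some `A d`
      have hfin : ∀ s : Finset (Set α), (↑s ⊆ Set.range A) → ∃ d : D, A d ⊆ ⋂₀ ↑s := by
        intro s
        induction s using Finset.induction_on with
        | empty =>
          intro _
          refine ⟨⟨⟨0, ⊤, finZeroElim⟩, IsQN.of_isQF BoundedFormula.IsQF.top, ?_⟩, by simp⟩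
          simp [Formula.Realize]
        | @insert t u ht ih =>
          intro hsub
          obtain ⟨d, hd⟩ := ih (fun x hx => hsub (by simp [hx]))
          obtain ⟨dt, hdt⟩ := hsub (show t ∈ ↑(insert t u) by simp)
          obtain ⟨d₃, hd₃⟩ := hdir dt d
          refine ⟨d₃, ?_⟩
          rw [Finset.coe_insert, Set.sInter_insert]
          intro x hx
          exact ⟨hdt ▸ (hd₃ hx).1, hd ((hd₃ hx).2)⟩
      have hgen : (Filter.generate (Set.range A)).NeBot := by
        rw [Filter.generate_neBot_iff]
        intro t hts htf
        obtain ⟨d, hd⟩ := hfin htf.toFinset (by rwa [Set.Finite.coe_toFinset])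
        rw [Set.Finite.coe_toFinset] at hd
        exact Set.Nonempty.mono hd (hAne d)
      let U : Ultrafilter α := @Ultrafilter.of _ (Filter.generate (Set.range A)) hgen
      have hU : ∀ d : D, A d ∈ U := fun d =>
        Ultrafilter.of_le _ (Filter.mem_generate_of_mem (Set.mem_range_self d))
      -- the ultrapower
      let P : Type w := (U : Filter α).Product (fun _ => M)
      let ι : (α → M) → P := fun x => (↑x : (U : Filter α).Product (fun _ => M))
      refine ⟨P, inferInstance,
        { toFun := fun a => ι (fun _ : α => a)
          map_formula' := by
            intro n φ x
            rw [show ((fun a => ι (fun _ : α => a)) ∘ x)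
              = (fun i => (↑(fun _ : α => x i) : (U : Filter α).Product (fun _ => M)))
              from rfl]
            refine (Ultraproduct.realize_formula_cast (u := U) φ (fun i (_ : α) => x i)).trans ?_
            simp },
        fun x => ι (fun h : α => h.1 x), ?_, ?_⟩
      · intro a
        show ι (fun h : α => h.1 ↑a) = ι (fun _ : α => a)
        congr 1
        funext h
        exact h.2 a
      · intro m φ hφ v hv
        have key := (Ultraproduct.realize_formula_cast (u := U) φ (fun i (h : α) => h.1 (v i))).2 ?_
        · exact key
        · have : {h : α | Formula.Realize (M := M) φ (fun i => h.1 (v i))} ∈ U :=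
            hU ⟨⟨m, φ, v⟩, hφ, hv⟩
          exact this
  · rintro ⟨M', iM', g, f, hfix, hpres⟩
    letI := iM'
    intro m φ hφ v hv
    have hb := ea_preserved (f := f) hpres hφ rfl rfl (fun i => ((v i : M) : N)) default hv
    rw [show (f ∘ fun i => ((v i : M) : N)) = (g ∘ v) from funext fun i => hfix (v i)] at hb
    have hform : Formula.Realize (M := M') φ (g ∘ v) := by
      unfold Formula.Realize
      rwa [show (f ∘ (default : Fin 0 → N)) = (default : Fin 0 → M')
        from funext fun i => i.elim0] at hb
    exact (g.map_formula φ v).1 hform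
end

section
/- Let G and H be ordered abelian groups that are ∃-closed in ordered abelian groups G' and H' respectively. Then the lexicographic sum G ⊕ H is ∃-closed in G' ⊕ H'. -/
open FirstOrder Language

/-- The language `{+, -, 0, <}` of ordered abelian groups. -/
def oagLang : FirstOrder.Language :=
  { Functions := fun n => match n with | 0 => PUnit | 1 => PUnit | 2 => PUnit | _ => Empty
    Relations := fun n => match n with | 2 => PUnit | _ => Empty }

/-- The canonical `oagLang`-structure on a linearly ordered abelian group. -/
def oagStructure (G : Type*) [AddCommGroup G] [LinearOrder G] [IsOrderedAddMonoid G] : oagLang.Structure G where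
  funMap {n} f x :=
    match n, f with
    | 0, _ => 0
    | 1, _ => -x 0
    | 2, _ => x 0 + x 1
  RelMap {n} r x :=
    match n, r with
    | 2, _ => x 0 < x 1

/-- A subgroup `H` of a linearly ordered abelian group `G` is `Σ_k`-closed (`b = true`) or
`Π_k`-closed (`b = false`) in `G`. -/
def QNClosedSubgroup {G : Type*} [AddCommGroup G] [LinearOrder G] [IsOrderedAddMonoid G] (H : AddSubgroup G)
    (b : Bool) (k : ℕ) : Prop :=
  ∀ (m : ℕ) (φ : oagLang.Formula (Fin m)), IsQN b k φ → ∀ v : Fin m → H,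
    (letI := oagStructure G; Formula.Realize φ (fun i => (v i : G))) →
    (letI := oagStructure H; Formula.Realize φ v)

/-- The lexicographic sum `G ⊕ H` of two subgroups `G ≤ G'`, `H ≤ H'`, viewed as a subgroup of
the lexicographic sum `G' ⊕ H'` (first coordinate dominating). -/
def lexSum {G' H' : Type*} [AddCommGroup G'] [LinearOrder G'] [IsOrderedAddMonoid G']
    [AddCommGroup H'] [LinearOrder H'] [IsOrderedAddMonoid H']
    (G : AddSubgroup G') (H : AddSubgroup H') : AddSubgroup (Lex (G' × H')) where
  carrier := {x | (ofLex x).1 ∈ G ∧ (ofLex x).2 ∈ H}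
  zero_mem' := ⟨G.zero_mem, H.zero_mem⟩
  add_mem' := fun ha hb => ⟨G.add_mem ha.1 hb.1, H.add_mem ha.2 hb.2⟩
  neg_mem' := fun ha => ⟨G.neg_mem ha.1, H.neg_mem ha.2⟩

section Aux
open FirstOrder.Language BoundedFormula
attribute [local instance] oagStructure

lemma term_hom {M N : Type*} [AddCommGroup M] [LinearOrder M] [IsOrderedAddMonoid M] [AddCommGroup N] [LinearOrder N] [IsOrderedAddMonoid N]
    (f : M →+ N) {α : Type*} (val : α → M) (t : oagLang.Term α) :
    t.realize (fun i => f (val i)) = f (t.realize val) := by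
  induction t with
  | var i => rfl
  | @func l F ts ih =>
    rcases l with _ | _ | _ | l
    · show (0 : N) = f (0 : M)
      rw [map_zero]
    · show -(ts 0).realize (fun i => f (val i)) = f (-(ts 0).realize val)
      rw [ih, map_neg]
    · show (ts 0).realize (fun i => f (val i)) + (ts 1).realize (fun i => f (val i))
        = f ((ts 0).realize val + (ts 1).realize val)
      rw [ih, ih, map_add]
    · exact Empty.elim F


lemma relMap_lt {M : Type*} [AddCommGroup M] [LinearOrder M] [IsOrderedAddMonoid M] (r : oagLang.Relations 2)
    (x : Fin 2 → M) : Structure.RelMap r x ↔ x 0 < x 1 := Iff.rfl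

/-- The list of pairs of terms occurring in atomic subformulas. -/
def atomPairs {α : Type*} : ∀ {n : ℕ}, oagLang.BoundedFormula α n →
    List (oagLang.Term (α ⊕ Fin n) × oagLang.Term (α ⊕ Fin n))
  | _, .falsum => []
  | _, .equal t s => [(t, s)]
  | _, @BoundedFormula.rel _ _ _ l R ts =>
      (match l, R, ts with
        | 2, _, ts => [(ts 0, ts 1)]
        | 0, R, _ => Empty.elim R
        | 1, R, _ => Empty.elim R
        | (_+3), R, _ => Empty.elim R)
  | _, .imp f g => atomPairs f ++ atomPairs g
  | _, .all _ => []

@[simp] lemma atomPairs_falsum {α : Type*} {n : ℕ} :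
    atomPairs (falsum : oagLang.BoundedFormula α n) = [] := rfl
@[simp] lemma atomPairs_equal {α : Type*} {n : ℕ} (t s : oagLang.Term (α ⊕ Fin n)) :
    atomPairs (BoundedFormula.equal t s) = [(t, s)] := rfl
@[simp] lemma atomPairs_rel {α : Type*} {n : ℕ} (R : oagLang.Relations 2)
    (ts : Fin 2 → oagLang.Term (α ⊕ Fin n)) :
    atomPairs (BoundedFormula.rel R ts) = [(ts 0, ts 1)] := rfl
@[simp] lemma atomPairs_imp {α : Type*} {n : ℕ} (f g : oagLang.BoundedFormula α n) :
    atomPairs (f.imp g) = atomPairs f ++ atomPairs g := rfl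

/-- The formula expressing that `t` and `s` compare as `c`. -/
def cmpFormula {α : Type*} {n : ℕ} (c : Ordering) (t s : oagLang.Term (α ⊕ Fin n)) :
    oagLang.BoundedFormula α n :=
  match c with
  | .lt => BoundedFormula.rel (l := 2) (PUnit.unit : oagLang.Relations 2) ![t, s]
  | .eq => t.bdEqual s
  | .gt => BoundedFormula.rel (l := 2) (PUnit.unit : oagLang.Relations 2) ![s, t]

lemma cmpFormula_isQF {α : Type*} {n : ℕ} (c : Ordering) (t s : oagLang.Term (α ⊕ Fin n)) :
    (cmpFormula c t s).IsQF := by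
  cases c <;> exact (by first | exact IsAtomic.rel _ _ | exact IsAtomic.equal _ _ : IsAtomic _).isQF

lemma cmpFormula_realize {M : Type*} [AddCommGroup M] [LinearOrder M] [IsOrderedAddMonoid M] {α : Type*} {n : ℕ}
    (c : Ordering) (t s : oagLang.Term (α ⊕ Fin n)) (v : α → M) (xs : Fin n → M) :
    (cmpFormula c t s).Realize v xs ↔
      compare (t.realize (Sum.elim v xs)) (s.realize (Sum.elim v xs)) = c := by
  cases c
  · rw [show (cmpFormula .lt t s).Realize v xs ↔
        t.realize (Sum.elim v xs) < s.realize (Sum.elim v xs) from Iff.rfl, compare_lt_iff_lt]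
  · rw [show (cmpFormula .eq t s).Realize v xs ↔
        t.realize (Sum.elim v xs) = s.realize (Sum.elim v xs) from Iff.rfl, compare_eq_iff_eq]
  · rw [show (cmpFormula .gt t s).Realize v xs ↔
        s.realize (Sum.elim v xs) < t.realize (Sum.elim v xs) from Iff.rfl, compare_gt_iff_gt]

lemma compare_congr {A B : Type*} [LinearOrder A] [LinearOrder B] {a b : A} {a' b' : B}
    (h1 : a < b ↔ a' < b') (h2 : a = b ↔ a' = b') : compare a b = compare a' b' := by
  rcases lt_trichotomy a b with h | h | h
  · rw [compare_lt_iff_lt.2 h, compare_lt_iff_lt.2 (h1.1 h)]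
  · rw [compare_eq_iff_eq.2 h, compare_eq_iff_eq.2 (h2.1 h)]
  · rw [compare_gt_iff_gt.2 h]
    have : b' < a' := by
      rcases lt_trichotomy a' b' with h' | h' | h'
      · exact absurd (h1.2 h') (lt_asymm h)
      · exact absurd (h2.2 h') (ne_of_gt h)
      · exact h'
    rw [compare_gt_iff_gt.2 this]

lemma lt_iff_of_compare_eq {A B : Type*} [LinearOrder A] [LinearOrder B] {a b : A} {a' b' : B}
    (h : compare a b = compare a' b') : a < b ↔ a' < b' := by
  constructor
  · intro e
    exact compare_lt_iff_lt.1 (by rw [← h]; exact compare_lt_iff_lt.2 e)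
  · intro e
    exact compare_lt_iff_lt.1 (by rw [h]; exact compare_lt_iff_lt.2 e)

lemma eq_iff_of_compare_eq {A B : Type*} [LinearOrder A] [LinearOrder B] {a b : A} {a' b' : B}
    (h : compare a b = compare a' b') : a = b ↔ a' = b' := by
  constructor
  · intro e
    exact compare_eq_iff_eq.1 (by rw [← h]; exact compare_eq_iff_eq.2 e)
  · intro e
    exact compare_eq_iff_eq.1 (by rw [h]; exact compare_eq_iff_eq.2 e)

/-- Truth of a quantifier-free formula only depends on the comparison data of its atoms. -/
lemma realize_iff_of_atomPairs {M N : Type*} [AddCommGroup M] [LinearOrder M] [IsOrderedAddMonoid M]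
    [AddCommGroup N] [LinearOrder N] [IsOrderedAddMonoid N] {α : Type*} {n : ℕ}
    {ψ : oagLang.BoundedFormula α n} (h : ψ.IsQF)
    (v : α → M) (xs : Fin n → M) (w : α → N) (ys : Fin n → N)
    (hcmp : ∀ p ∈ atomPairs ψ,
      compare (p.1.realize (Sum.elim v xs)) (p.2.realize (Sum.elim v xs)) =
      compare (p.1.realize (Sum.elim w ys)) (p.2.realize (Sum.elim w ys))) :
    ψ.Realize v xs ↔ ψ.Realize w ys := by
  induction h with
  | falsum => exact Iff.rfl
  | @of_isAtomic φ hat =>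
    cases hat with
    | equal t s =>
      rw [realize_bdEqual, realize_bdEqual]
      exact eq_iff_of_compare_eq (hcmp (t, s) (by rw [show t.bdEqual s = BoundedFormula.equal t s from rfl]; simp))
    | @rel l R ts =>
      rcases l with _ | _ | _ | l
      · exact Empty.elim R
      · exact Empty.elim R
      · rw [show (R.boundedFormula ts).Realize v xs ↔
            (ts 0).realize (Sum.elim v xs) < (ts 1).realize (Sum.elim v xs) from Iff.rfl,
          show (R.boundedFormula ts).Realize w ys ↔
            (ts 0).realize (Sum.elim w ys) < (ts 1).realize (Sum.elim w ys) from Iff.rfl]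
        exact lt_iff_of_compare_eq (hcmp (ts 0, ts 1) (by
          rw [show R.boundedFormula ts = BoundedFormula.rel R ts from rfl, atomPairs_rel]
          simp))
      · exact Empty.elim R
  | @imp φ₁ φ₂ h₁ h₂ ih₁ ih₂ =>
    rw [realize_imp, realize_imp]
    rw [ih₁ (fun p hp => hcmp p (by simp [hp])), ih₂ (fun p hp => hcmp p (by simp [hp]))]

lemma isQF_foldr {α : Type*} {n : ℕ} (l : List (oagLang.BoundedFormula α n))
    (h : ∀ φ ∈ l, φ.IsQF) : (l.foldr (· ⊓ ·) ⊤).IsQF := by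
  induction l with
  | nil => exact IsQF.top
  | cons a l ih =>
    exact (h a (by simp)).inf (ih fun φ hφ => h φ (by simp [hφ]))

lemma isQN_exs_s11 {α : Type*} : ∀ {n : ℕ} {ψ : oagLang.BoundedFormula α n},
    IsQN true 1 ψ → IsQN true 1 ψ.exs := by
  intro n
  induction n with
  | zero => exact fun h => h
  | succ n ih => exact fun h => ih (IsQN.ex h)

/-- comparisons are preserved by strictly monotone injective maps -/
lemma compare_map {M N : Type*} [LinearOrder M] [LinearOrder N] (f : M → N)
    (hlt : ∀ x y : M, f x < f y ↔ x < y) (hinj : Function.Injective f) (a b : M) :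
    compare (f a) (f b) = compare a b :=
  compare_congr (hlt a b) ⟨fun h => hinj h, fun h => by rw [h]⟩

/-- Quantifier-free formulas transfer along ordered group embeddings. -/
lemma qf_transfer {M N : Type*} [AddCommGroup M] [LinearOrder M] [IsOrderedAddMonoid M] [AddCommGroup N] [LinearOrder N] [IsOrderedAddMonoid N]
    (f : M →+ N) (hlt : ∀ x y : M, f x < f y ↔ x < y) (hinj : Function.Injective f)
    {α : Type*} {n : ℕ} {ψ : oagLang.BoundedFormula α n} (h : ψ.IsQF)
    (v : α → M) (xs : Fin n → M) :
    ψ.Realize (fun i => f (v i)) (fun i => f (xs i)) ↔ ψ.Realize v xs := by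
  refine realize_iff_of_atomPairs h _ _ _ _ fun p _ => ?_
  have e : Sum.elim (fun i => f (v i)) (fun i => f (xs i)) =
      fun i => f (Sum.elim v xs i) := by funext i; cases i <;> rfl
  rw [e, term_hom f (Sum.elim v xs) p.1, term_hom f (Sum.elim v xs) p.2,
    compare_map f hlt hinj]
end Aux


section Main
open FirstOrder.Language BoundedFormula
attribute [local instance] oagStructure

variable {G' H' : Type*} [AddCommGroup G'] [LinearOrder G'] [IsOrderedAddMonoid G'] [AddCommGroup H'] [LinearOrder H'] [IsOrderedAddMonoid H']

lemma heart (G : AddSubgroup G') (H : AddSubgroup H')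
    (hG : QNClosedSubgroup G true 1) (hH : QNClosedSubgroup H true 1)
    {m n : ℕ} {ψ : oagLang.BoundedFormula (Fin m) n} (hqf : ψ.IsQF)
    (v : Fin m → lexSum G H) (xs : Fin n → Lex (G' × H'))
    (h : ψ.Realize (fun i => ((v i : Lex (G' × H')))) xs) :
    ∃ ys : Fin n → lexSum G H, ψ.Realize v ys := by
  classical
  let fstH : Lex (G' × H') →+ G' := AddMonoidHom.mk' (fun z => (ofLex z).1) (fun _ _ => rfl)
  let sndH : Lex (G' × H') →+ H' := AddMonoidHom.mk' (fun z => (ofLex z).2) (fun _ _ => rfl)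
  let a : Fin n → G' := fun i => (ofLex (xs i)).1
  let b : Fin n → H' := fun i => (ofLex (xs i)).2
  have memv : ∀ i, (ofLex ((v i : Lex (G' × H')))).1 ∈ G ∧ (ofLex ((v i : Lex (G' × H')))).2 ∈ H :=
    fun i => (v i).2
  let vG : Fin m → G := fun i => ⟨_, (memv i).1⟩
  let vH : Fin m → H := fun i => ⟨_, (memv i).2⟩
  let X : Fin m ⊕ Fin n → G' := Sum.elim (fun i => (vG i : G')) a
  let Y : Fin m ⊕ Fin n → H' := Sum.elim (fun i => (vH i : H')) b
  let cG : oagLang.Term (Fin m ⊕ Fin n) × oagLang.Term (Fin m ⊕ Fin n) → Ordering :=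
    fun p => compare (p.1.realize X) (p.2.realize X)
  let cH : oagLang.Term (Fin m ⊕ Fin n) × oagLang.Term (Fin m ⊕ Fin n) → Ordering :=
    fun p => compare (p.1.realize Y) (p.2.realize Y)
  let χG : oagLang.BoundedFormula (Fin m) n :=
    ((atomPairs ψ).map fun p => cmpFormula (cG p) p.1 p.2).foldr (· ⊓ ·) ⊤
  let χH : oagLang.BoundedFormula (Fin m) n :=
    ((atomPairs ψ).map fun p =>
      if cG p = Ordering.eq then cmpFormula (cH p) p.1 p.2 else ⊤).foldr (· ⊓ ·) ⊤
  have hχGqf : χG.IsQF := isQF_foldr _ (by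
    intro φ hφ; rw [List.mem_map] at hφ; obtain ⟨p, _, rfl⟩ := hφ; exact cmpFormula_isQF _ _ _)
  have hχHqf : χH.IsQF := isQF_foldr _ (by
    intro φ hφ; rw [List.mem_map] at hφ; obtain ⟨p, _, rfl⟩ := hφ
    split
    · exact cmpFormula_isQF _ _ _
    · exact IsQF.top)
  have hχG' : χG.Realize (M := G') (fun i => (vG i : G')) a := by
    rw [realize_foldr_inf]
    intro φ hφ; rw [List.mem_map] at hφ; obtain ⟨p, hp, rfl⟩ := hφ
    exact (cmpFormula_realize _ _ _ _ _).2 rfl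
  have hGex : (letI := oagStructure G; Formula.Realize χG.exs vG) := by
    apply hG m χG.exs (isQN_exs_s11 (IsQN.of_isQF hχGqf)) vG
    exact BoundedFormula.realize_exs.2 ⟨a, hχG'⟩
  obtain ⟨aS, haS⟩ := BoundedFormula.realize_exs.1 hGex
  have haS' : χG.Realize (M := G') (fun i => (vG i : G')) (fun i => (aS i : G')) :=
    (qf_transfer G.subtype (fun x y => Subtype.coe_lt_coe) Subtype.coe_injective
      hχGqf vG aS).2 haS
  have hGfacts : ∀ p ∈ atomPairs ψ,
      compare (p.1.realize (Sum.elim (fun i => (vG i : G')) (fun i => (aS i : G'))))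
              (p.2.realize (Sum.elim (fun i => (vG i : G')) (fun i => (aS i : G')))) = cG p := by
    intro p hp
    have := (realize_foldr_inf _ _ _).1 haS' _ (List.mem_map.2 ⟨p, hp, rfl⟩)
    exact (cmpFormula_realize _ _ _ _ _).1 this
  have hχH' : χH.Realize (M := H') (fun i => (vH i : H')) b := by
    rw [realize_foldr_inf]
    intro φ hφ; rw [List.mem_map] at hφ; obtain ⟨p, hp, rfl⟩ := hφ
    split
    · exact (cmpFormula_realize _ _ _ _ _).2 rfl
    · exact realize_top.2 trivial
  have hHex : (letI := oagStructure H; Formula.Realize χH.exs vH) := by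
    apply hH m χH.exs (isQN_exs_s11 (IsQN.of_isQF hχHqf)) vH
    exact BoundedFormula.realize_exs.2 ⟨b, hχH'⟩
  obtain ⟨bS, hbS⟩ := BoundedFormula.realize_exs.1 hHex
  have hbS' : χH.Realize (M := H') (fun i => (vH i : H')) (fun i => (bS i : H')) :=
    (qf_transfer H.subtype (fun x y => Subtype.coe_lt_coe) Subtype.coe_injective
      hχHqf vH bS).2 hbS
  have hHfacts : ∀ p ∈ atomPairs ψ, cG p = Ordering.eq →
      compare (p.1.realize (Sum.elim (fun i => (vH i : H')) (fun i => (bS i : H'))))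
              (p.2.realize (Sum.elim (fun i => (vH i : H')) (fun i => (bS i : H')))) = cH p := by
    intro p hp hpe
    have := (realize_foldr_inf _ _ _).1 hbS' _ (List.mem_map.2 ⟨p, hp, rfl⟩)
    rw [if_pos hpe] at this
    exact (cmpFormula_realize _ _ _ _ _).1 this
  let ys : Fin n → lexSum G H := fun i =>
    ⟨toLex ((aS i : G'), (bS i : H')), ⟨(aS i).2, (bS i).2⟩⟩
  have decomp : ∀ (w : Fin n → Lex (G' × H')) (t : oagLang.Term (Fin m ⊕ Fin n)),
      t.realize (Sum.elim (fun i => ((v i : Lex (G' × H')))) w)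
        = toLex (t.realize (Sum.elim (fun i => (vG i : G')) (fun i => (ofLex (w i)).1)),
                 t.realize (Sum.elim (fun i => (vH i : H')) (fun i => (ofLex (w i)).2))) := by
    intro w t
    set val := Sum.elim (fun i => ((v i : Lex (G' × H')))) w with hval
    have e1 : (fun i => fstH (val i)) =
        Sum.elim (fun i => (vG i : G')) (fun i => (ofLex (w i)).1) := by
      funext i; cases i <;> rfl
    have e2 : (fun i => sndH (val i)) =
        Sum.elim (fun i => (vH i : H')) (fun i => (ofLex (w i)).2) := by
      funext i; cases i <;> rfl
    have h1 := term_hom fstH val t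
    have h2 := term_hom sndH val t
    rw [e1] at h1
    rw [e2] at h2
    have : ofLex (t.realize val) =
        (t.realize (Sum.elim (fun i => (vG i : G')) (fun i => (ofLex (w i)).1)),
         t.realize (Sum.elim (fun i => (vH i : H')) (fun i => (ofLex (w i)).2))) := by
      apply Prod.ext
      · exact h1.symm
      · exact h2.symm
    calc t.realize val = toLex (ofLex (t.realize val)) := rfl
      _ = _ := by rw [this]
  have key : ψ.Realize (M := Lex (G' × H')) (fun i => ((v i : Lex (G' × H'))))
      (fun i => ((ys i : Lex (G' × H')))) := by
    refine (realize_iff_of_atomPairs hqf _ _ _ _ ?_).1 h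
    intro p hp
    have d1x := decomp xs p.1
    have d2x := decomp xs p.2
    have d1y := decomp (fun i => ((ys i : Lex (G' × H')))) p.1
    have d2y := decomp (fun i => ((ys i : Lex (G' × H')))) p.2
    rw [d1x, d2x, d1y, d2y]
    have hA := hGfacts p hp
    have eA1 : p.1.realize X < p.2.realize X ↔
        p.1.realize (Sum.elim (fun i => (vG i : G')) (fun i => (aS i : G'))) <
        p.2.realize (Sum.elim (fun i => (vG i : G')) (fun i => (aS i : G'))) :=
      (lt_iff_of_compare_eq hA).symm
    have eA2 : p.1.realize X = p.2.realize X ↔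
        p.1.realize (Sum.elim (fun i => (vG i : G')) (fun i => (aS i : G'))) =
        p.2.realize (Sum.elim (fun i => (vG i : G')) (fun i => (aS i : G'))) :=
      (eq_iff_of_compare_eq hA).symm
    apply compare_congr
    · rw [Prod.Lex.lt_iff, Prod.Lex.lt_iff]
      by_cases hAeq : p.1.realize X = p.2.realize X
      · have hB := hHfacts p hp (compare_eq_iff_eq.2 hAeq)
        exact or_congr eA1 (and_congr eA2 (lt_iff_of_compare_eq hB).symm)
      · constructor
        · rintro (hl | ⟨he, -⟩)
          · exact Or.inl (eA1.1 hl)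
          · exact absurd he hAeq
        · rintro (hl | ⟨he, -⟩)
          · exact Or.inl (eA1.2 hl)
          · exact absurd (eA2.2 he) hAeq
    · rw [toLex_inj, toLex_inj, Prod.ext_iff, Prod.ext_iff]
      by_cases hAeq : p.1.realize X = p.2.realize X
      · have hB := hHfacts p hp (compare_eq_iff_eq.2 hAeq)
        exact and_congr eA2 (eq_iff_of_compare_eq hB).symm
      · constructor
        · rintro ⟨he, -⟩
          exact absurd he hAeq
        · rintro ⟨he, -⟩
          exact absurd (eA2.2 he) hAeq
  exact ⟨ys, (qf_transfer (lexSum G H).subtype (fun x y => Subtype.coe_lt_coe)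
    Subtype.coe_injective hqf v ys).1 key⟩

lemma lemA (G : AddSubgroup G') (H : AddSubgroup H')
    (hG : QNClosedSubgroup G true 1) (hH : QNClosedSubgroup H true 1)
    {m : ℕ} {b : Bool} {k n : ℕ} {φ : oagLang.BoundedFormula (Fin m) n}
    (hφ : IsQN b k φ) : b = true → k = 1 →
    ∀ (v : Fin m → lexSum G H) (xs : Fin n → Lex (G' × H')),
      φ.Realize (fun i => ((v i : Lex (G' × H')))) xs → ∃ ys, φ.Realize v ys := by
  induction hφ with
  | of_isQF hqf =>
    intro _ _ v xs hr
    exact heart G H hG hH hqf v xs hr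
  | @of_flip b' k' n' φ' h ih =>
    rintro rfl hk
    have hk0 : k' = 0 := by omega
    subst hk0
    have hqf : φ'.IsQF := by cases h with | of_isQF hq => exact hq
    intro v xs hr
    exact heart G H hG hH hqf v xs hr
  | @ex k' n' φ' h ih =>
    rintro - hk
    intro v xs hr
    rw [realize_ex] at hr
    obtain ⟨z, hz⟩ := hr
    obtain ⟨ys, hys⟩ := ih rfl hk v (Fin.snoc xs z) hz
    refine ⟨Fin.init ys, realize_ex.2 ⟨ys (Fin.last _), ?_⟩⟩
    rw [Fin.snoc_init_self]
    exact hys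
  | all h ih =>
    rintro hb
    exact absurd hb (by simp)

end Main

/-- if `G` and `H` are existentially closed subgroups of ordered abelian groups
`G'` and `H'` respectively, then the lexicographic sum `G ⊕ H` is existentially closed in the
lexicographic sum `G' ⊕ H'`. -/
theorem statement11 {G' H' : Type*} [AddCommGroup G'] [LinearOrder G'] [IsOrderedAddMonoid G']
    [AddCommGroup H'] [LinearOrder H'] [IsOrderedAddMonoid H'] (G : AddSubgroup G') (H : AddSubgroup H')
    (hG : QNClosedSubgroup G true 1) (hH : QNClosedSubgroup H true 1) :
    QNClosedSubgroup (lexSum G H) true 1 := by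
  intro m φ hφ v hr
  obtain ⟨ys, hys⟩ := lemA G H hG hH hφ rfl rfl v default hr
  have : ys = default := by funext i; exact i.elim0
  rw [this] at hys
  exact hys
end
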